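/- Let M = S^{p+1}_+ × S^q with metric g = dr² + sin²r · g_{S^p} + ((q−1)/(p+m)) g_{S^q}, where r ∈ [0, π/2] is the height-function parameter on the hemisphere S^{p+1}_+, m > 0, q ≥ 2. Then with u = cos r and λ = p + m, the quadruple (M, g, u, λ) satisfies ∇²u = (u/m)(Ric − λ g), u > 0 on the interior, and u = 0 on the boundary; i.e., it is a nontrivial compact m-quasi-Einstein manifold with boundary. -/

import Mathlib

open scoped BigOperators

/-- On `M = S^{p+1}_+ × S^q` with the doubly warped product metric
`g = dr² + sin²r·g_{S^p} + ((q−1)/(p+m))·g_{S^q}` (so `φ = sin`, `ψ = √((q−1)/(p+m))`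
constant), with `u = cos r` and `λ = p + m`, the quadruple satisfies the m-quasi-Einstein
equation `∇²u = (u/m)(Ric − λg)`, `u > 0` on the interior and `u = 0` on the boundary
`{r = π/2}`.  Using the warped-product formulas, `∇²u` has components `u''` (radial),
`u'·φ'φ` relative to `g_{S^p}` and `u'·ψ'ψ` relative to `g_{S^q}`, while the Ricci
eigenvalues `ρ_r, ρ_X, ρ_Y` are given by the standard formulas; the quasi-Einstein
equation is its three block components below. -/
theorem hemisphere_times_sphere_quasiEinstein
    (p q : ℕ) (m : ℝ) (hm : 0 < m) (hq : 2 ≤ q)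
    (φ ψ u : ℝ → ℝ) (lam : ℝ)
    (hφ : φ = Real.sin)
    (hψ : ψ = fun _ => Real.sqrt (((q : ℝ) - 1) / ((p : ℝ) + m)))
    (hu : u = Real.cos)
    (hlam : lam = (p : ℝ) + m)
    (ρr ρX ρY : ℝ → ℝ)
    (hρr : ∀ r, ρr r = -(p : ℝ) * deriv (deriv φ) r / φ r
        - (q : ℝ) * deriv (deriv ψ) r / ψ r)
    (hρX : ∀ r, ρX r = -(deriv (deriv φ) r) / φ r
        + ((p : ℝ) - 1) * (1 - (deriv φ r) ^ 2) / (φ r) ^ 2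
        - (q : ℝ) * (deriv φ r * deriv ψ r) / (φ r * ψ r))
    (hρY : ∀ r, ρY r = -(deriv (deriv ψ) r) / ψ r
        + ((q : ℝ) - 1) * (1 - (deriv ψ r) ^ 2) / (ψ r) ^ 2
        - (p : ℝ) * (deriv φ r * deriv ψ r) / (φ r * ψ r)) :
    (∀ r ∈ Set.Ioo (0 : ℝ) (Real.pi / 2),
        deriv (deriv u) r = (u r / m) * (ρr r - lam)
      ∧ deriv u r * deriv φ r * φ r = (u r / m) * (ρX r - lam) * (φ r) ^ 2
      ∧ deriv u r * deriv ψ r * ψ r = (u r / m) * (ρY r - lam) * (ψ r) ^ 2)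
    ∧ (∀ r ∈ Set.Ico (0 : ℝ) (Real.pi / 2), 0 < u r)
    ∧ u (Real.pi / 2) = 0 := by
  subst hφ hψ hu hlam
  have hderiv_sin : deriv Real.sin = Real.cos := Real.deriv_sin
  have hderiv_cos : deriv Real.cos = fun x => -Real.sin x := Real.deriv_cos'
  have hψ0 : deriv (fun _ : ℝ => Real.sqrt (((q : ℝ) - 1) / ((p : ℝ) + m))) = fun _ => (0:ℝ) := by
    funext x; exact deriv_const x _
  have hpm : (0:ℝ) < (p : ℝ) + m := by positivity
  have hq1 : (0:ℝ) < (q : ℝ) - 1 := by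
    have : (2:ℝ) ≤ (q:ℝ) := by exact_mod_cast hq
    linarith
  have hψpos : (0:ℝ) < Real.sqrt (((q : ℝ) - 1) / ((p : ℝ) + m)) :=
    Real.sqrt_pos.mpr (div_pos hq1 hpm)
  have hψsq : (Real.sqrt (((q : ℝ) - 1) / ((p : ℝ) + m))) ^ 2 = ((q : ℝ) - 1) / ((p : ℝ) + m) :=
    Real.sq_sqrt (le_of_lt (div_pos hq1 hpm))
  refine ⟨?_, ?_, by simp⟩
  · intro r hr
    obtain ⟨hr0, hrπ⟩ := hr
    have hsin : 0 < Real.sin r := Real.sin_pos_of_pos_of_lt_pi hr0 (by linarith [Real.pi_pos])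
    have hsin' : Real.sin r ≠ 0 := ne_of_gt hsin
    have hcos : 0 < Real.cos r := Real.cos_pos_of_mem_Ioo ⟨by linarith [Real.pi_pos], hrπ⟩
    have e1 : deriv (deriv Real.sin) r = -Real.sin r := by rw [hderiv_sin, hderiv_cos]
    have e2 : deriv (deriv Real.cos) r = -Real.cos r := by
      rw [hderiv_cos]
      have : deriv (fun x => -Real.sin x) r = -Real.cos r := by
        rw [deriv.fun_neg]; simp [hderiv_sin]
      simpa using this
    have e3 : deriv (deriv (fun _ : ℝ => Real.sqrt (((q : ℝ) - 1) / ((p : ℝ) + m)))) r = 0 := by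
      rw [hψ0]; simp
    refine ⟨?_, ?_, ?_⟩
    · rw [e2, hρr r, e1, e3]
      field_simp
      ring
    · rw [hρX r, e1, hψ0, hderiv_sin, hderiv_cos]
      have hc2 : 1 - (Real.cos r) ^ 2 = Real.sin r ^ 2 := by
        have := Real.sin_sq_add_cos_sq r; linarith
      rw [hc2]
      field_simp
      ring
    · rw [hρY r, e3, hψ0, hderiv_cos]
      have : ((q : ℝ) - 1) * (1 - 0 ^ 2) / (Real.sqrt (((q : ℝ) - 1) / ((p : ℝ) + m))) ^ 2
          - ((p:ℝ) + m) = 0 := by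
        rw [hψsq]; field_simp; ring
      simp only [hψsq]
      field_simp
      ring
  · intro r hr
    exact Real.cos_pos_of_mem_Ioo ⟨by linarith [Real.pi_pos, hr.1], hr.2⟩
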